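/- Let J : ℝ → ℝ be nonnegative, even, integrable with ∫ J = 1 and ∫ |x| J(x) dx < ∞. Let U : ℝ → [0,1] be nondecreasing and continuous with U(−∞) = 0, and suppose there exist constants C > 0 and R > 0 such that (J*U)(x) − U(x) ≥ C·U(x) for all x ≤ −R. Then ∫_{−∞}^{0} U(x) dx < ∞. -/

import Mathlib

open MeasureTheory Filter Set Topology

/-- integrability of the front tail: `∫_{−∞}^0 U < ∞`. -/
theorem front_tail_integrable
    (J U : ℝ → ℝ) (C R : ℝ)
    (hJpos : ∀ x, 0 ≤ J x)
    (hJeven : ∀ x, J x = J (-x))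
    (hJint : Integrable J)
    (hJone : ∫ x, J x = 1)
    (hJmom : Integrable (fun x => |x| * J x))
    (hUcont : Continuous U)
    (hUmono : Monotone U)
    (hUrange : ∀ x, U x ∈ Set.Icc (0 : ℝ) 1)
    (hUlim : Tendsto U atBot (nhds 0))
    (hC : 0 < C) (hR : 0 < R)
    (hineq : ∀ x ≤ -R, C * U x ≤ (∫ y : ℝ, J (x - y) * U y) - U x) :
    IntegrableOn U (Set.Iic (0 : ℝ)) := by
  have hU0 : ∀ x, 0 ≤ U x := fun x => (hUrange x).1
  have hU1 : ∀ x, U x ≤ 1 := fun x => (hUrange x).2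
  have hUii : ∀ a b : ℝ, IntervalIntegrable U volume a b :=
    fun a b => hUcont.intervalIntegrable a b
  set M : ℝ := ∫ z, |z| * J z with hMdef
  have hM0 : 0 ≤ M := integral_nonneg fun z => mul_nonneg (abs_nonneg z) (hJpos z)
  -- sliding bound
  have hslide : ∀ c z : ℝ, (∫ x in (c - z)..c, U x) ≤ |z| := by
    intro c z
    rcases le_or_gt 0 z with hz | hz
    · have h1 : (∫ x in (c - z)..c, U x) ≤ ∫ x in (c - z)..c, (1 : ℝ) :=
        intervalIntegral.integral_mono_on (by linarith) (hUii _ _)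
          intervalIntegrable_const (fun x _ => hU1 x)
      have h2 : (∫ x in (c - z)..c, (1 : ℝ)) = z := by simp
      rw [abs_of_nonneg hz]
      linarith
    · rw [intervalIntegral.integral_symm]
      have h1 : 0 ≤ ∫ x in c..(c - z), U x :=
        intervalIntegral.integral_nonneg (by linarith) (fun x _ => hU0 x)
      have h2 : 0 ≤ |z| := abs_nonneg z
      linarith
  -- the convolution F
  have hJm := hJint.aestronglyMeasurable
  have hmeas : ∀ x : ℝ, AEStronglyMeasurable (fun z => J z * U (x - z)) volume := fun x =>
    hJm.mul ((hUcont.comp (continuous_const.sub continuous_id)).aestronglyMeasurable)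
  have hbd : ∀ x z : ℝ, ‖J z * U (x - z)‖ ≤ J z := by
    intro x z
    rw [Real.norm_eq_abs, abs_mul, abs_of_nonneg (hJpos z), abs_of_nonneg (hU0 _)]
    exact mul_le_of_le_one_right (hJpos z) (hU1 _)
  have hIntF : ∀ x : ℝ, Integrable (fun z => J z * U (x - z)) := fun x =>
    hJint.mono' (hmeas x) (Eventually.of_forall (hbd x))
  set F : ℝ → ℝ := fun x => ∫ z, J z * U (x - z) with hFdef
  have hFcont : Continuous F :=
    continuous_of_dominated hmeas (fun x => Eventually.of_forall (hbd x)) hJint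
      (Eventually.of_forall fun z =>
        continuous_const.mul (hUcont.comp (continuous_id.sub continuous_const)))
  have hFeq : ∀ x : ℝ, (∫ y : ℝ, J (x - y) * U y) = F x := by
    intro x
    have h := integral_sub_left_eq_self (fun t => J t * U (x - t)) volume x
    simp only [sub_sub_cancel] at h
    exact h
  -- key uniform bound
  have hkey : ∀ a : ℝ, a ≤ -R → C * ∫ x in a..(-R), U x ≤ 2 * M := by
    intro a hab
    set b : ℝ := -R with hb
    -- continuity of z ↦ ∫ (a-z)..(b-z) U
    have hP : Continuous (fun t : ℝ => ∫ x in (0:ℝ)..t, U x) :=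
      intervalIntegral.continuous_primitive (fun c d => hUii c d) 0
    have hGrepr : ∀ z : ℝ, (∫ x in (a - z)..(b - z), U x) =
        (∫ x in (0:ℝ)..(b - z), U x) - ∫ x in (0:ℝ)..(a - z), U x := fun z =>
      (intervalIntegral.integral_interval_sub_left (hUii 0 (b - z)) (hUii 0 (a - z))).symm
    have hGcont : Continuous (fun z : ℝ => ∫ x in (a - z)..(b - z), U x) := by
      have : (fun z : ℝ => ∫ x in (a - z)..(b - z), U x) =
          fun z => (∫ x in (0:ℝ)..(b - z), U x) - ∫ x in (0:ℝ)..(a - z), U x :=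
        funext hGrepr
      rw [this]
      exact ((hP.comp (continuous_const.sub continuous_id)).sub
        (hP.comp (continuous_const.sub continuous_id)))
    -- Fubini
    have hprodmeas : AEStronglyMeasurable (fun p : ℝ × ℝ => J p.2 * U (p.1 - p.2))
        ((volume.restrict (Ioc a b)).prod volume) :=
      hJm.comp_snd.mul (hUcont.comp (continuous_fst.sub continuous_snd)).aestronglyMeasurable
    have hprod : Integrable (fun p : ℝ × ℝ => J p.2 * U (p.1 - p.2))
        ((volume.restrict (Ioc a b)).prod volume) := by
      rw [integrable_prod_iff hprodmeas]
      refine ⟨Eventually.of_forall fun x => hIntF x, ?_⟩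
      have hnorm : ∀ x : ℝ, (∫ z, ‖J z * U (x - z)‖) = F x := by
        intro x
        refine integral_congr_ae (Eventually.of_forall fun z => ?_)
        exact Real.norm_of_nonneg (mul_nonneg (hJpos z) (hU0 _))
      simp only [hnorm]
      exact hFcont.integrableOn_Ioc
    have hswap : (∫ x in Ioc a b, F x) = ∫ z, ∫ x in Ioc a b, J z * U (x - z) :=
      integral_integral_swap hprod
    have hinner : ∀ z : ℝ, (∫ x in Ioc a b, J z * U (x - z)) =
        J z * ∫ x in (a - z)..(b - z), U x := by
      intro z
      rw [← intervalIntegral.integral_of_le hab, intervalIntegral.integral_const_mul,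
        intervalIntegral.integral_comp_sub_right (fun x => U x) z]
    -- decomposition bound
    have hdecomp : ∀ z : ℝ, (∫ x in (a - z)..(b - z), U x) ≤ (∫ x in a..b, U x) + 2 * |z| := by
      intro z
      have e1 : (∫ x in (a - z)..a, U x) + (∫ x in a..(b - z), U x)
          = ∫ x in (a - z)..(b - z), U x :=
        intervalIntegral.integral_add_adjacent_intervals (hUii _ _) (hUii _ _)
      have e2 : (∫ x in a..b, U x) + (∫ x in b..(b - z), U x)
          = ∫ x in a..(b - z), U x :=
        intervalIntegral.integral_add_adjacent_intervals (hUii _ _) (hUii _ _)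
      have h2 : (∫ x in (a - z)..a, U x) ≤ |z| := hslide a z
      have h3 : (∫ x in b..(b - z), U x) ≤ |z| := by
        have h := hslide (b - z) (-z)
        rw [show (b - z) - (-z) = b by ring, abs_neg] at h
        exact h
      linarith
    have hGbd : ∀ z : ℝ, ‖J z * ∫ x in (a - z)..(b - z), U x‖ ≤ (b - a) * J z := by
      intro z
      have h1 : ‖∫ x in (a - z)..(b - z), U x‖ ≤ 1 * |(b - z) - (a - z)| :=
        intervalIntegral.norm_integral_le_of_norm_le_const fun x _ => by
          rw [Real.norm_eq_abs, abs_of_nonneg (hU0 x)]; exact hU1 x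
      have h2 : (1 : ℝ) * |(b - z) - (a - z)| = b - a := by
        rw [one_mul, show (b - z) - (a - z) = b - a by ring, abs_of_nonneg (by linarith)]
      rw [Real.norm_eq_abs, abs_mul, abs_of_nonneg (hJpos z), mul_comm]
      have := h1.trans_eq h2
      exact mul_le_mul_of_nonneg_right (le_of_eq rfl) (hJpos z) |>.trans
        (mul_le_mul_of_nonneg_right this (hJpos z))
    have hi1 : Integrable (fun z => J z * ∫ x in (a - z)..(b - z), U x) :=
      (hJint.const_mul (b - a)).mono' (hJm.mul hGcont.aestronglyMeasurable)
        (Eventually.of_forall fun z => by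
          simpa [Real.norm_eq_abs, abs_of_nonneg (hJpos z)] using hGbd z)
    have hi2 : Integrable (fun z => J z * (∫ x in a..b, U x) + 2 * (|z| * J z)) :=
      (hJint.mul_const _).add (hJmom.const_mul 2)
    have hmono2 : (∫ z, J z * ∫ x in (a - z)..(b - z), U x) ≤ (∫ x in a..b, U x) + 2 * M := by
      have hle : (∫ z, J z * ∫ x in (a - z)..(b - z), U x)
          ≤ ∫ z, (J z * (∫ x in a..b, U x) + 2 * (|z| * J z)) := by
        refine integral_mono hi1 hi2 fun z => ?_
        have := mul_le_mul_of_nonneg_left (hdecomp z) (hJpos z)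
        nlinarith [hJpos z, abs_nonneg z]
      have heq : (∫ z, (J z * (∫ x in a..b, U x) + 2 * (|z| * J z)))
          = (∫ x in a..b, U x) + 2 * M := by
        rw [integral_add (hJint.mul_const _) (hJmom.const_mul 2),
          integral_mul_const, integral_const_mul, hJone, one_mul, hMdef]
      linarith
    -- left side
    have hleft : C * ∫ x in a..b, U x ≤ (∫ x in Ioc a b, F x) - ∫ x in a..b, U x := by
      have hIU : IntegrableOn U (Ioc a b) := hUcont.integrableOn_Ioc
      have hmain : (∫ x in Ioc a b, C * U x) ≤ ∫ x in Ioc a b, (F x - U x) := by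
        refine setIntegral_mono_on ((continuous_const.mul hUcont).integrableOn_Ioc)
          ((hFcont.sub hUcont).integrableOn_Ioc) measurableSet_Ioc fun x hx => ?_
        have hx2 : x ≤ -R := hx.2
        have := hineq x hx2
        rwa [hFeq x] at this
      rw [integral_sub hFcont.integrableOn_Ioc hIU, integral_const_mul] at hmain
      rw [intervalIntegral.integral_of_le hab]
      exact hmain
    have hFbound : (∫ x in Ioc a b, F x) ≤ (∫ x in a..b, U x) + 2 * M := by
      rw [hswap]
      calc (∫ z, ∫ x in Ioc a b, J z * U (x - z))
          = ∫ z, J z * ∫ x in (a - z)..(b - z), U x := by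
            exact integral_congr_ae (Eventually.of_forall hinner)
        _ ≤ (∫ x in a..b, U x) + 2 * M := hmono2
    linarith
  -- integrability on Iic (-R)
  have hIic : IntegrableOn U (Iic (-R)) := by
    refine integrableOn_Iic_of_intervalIntegral_norm_bounded (2 * M / C) (-R)
      (fun i : ℝ => hUcont.integrableOn_Ioc) tendsto_id ?_
    filter_upwards [eventually_le_atBot (-R)] with i hi
    have h1 : (∫ x in i..(-R), ‖U x‖) = ∫ x in i..(-R), U x :=
      intervalIntegral.integral_congr fun x _ => Real.norm_of_nonneg (hU0 x)
    simp only [id_eq]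
    rw [h1]
    have := hkey i hi
    rw [le_div_iff₀ hC]
    linarith
  have h2 : IntegrableOn U (Icc (-R) 0) := hUcont.integrableOn_Icc
  exact (hIic.union h2).mono_set fun x hx => by
    rcases le_or_gt x (-R) with h | h
    · exact Or.inl h
    · exact Or.inr ⟨h.le, hx⟩
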